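/- arXiv:1509.01191 — 8 statements merged into one kernel-verified Lean document; each statement's English description precedes it below -/
import Mathlib

section
/- If A ⊆ D and there exists f ∈ F with A = f⁻¹(X) for some X ⊆ ran(f), then the filter U derived from #(D,F) measures A: either A ∈ U or D \ A ∈ U. -/
open scoped symmDiff

/-- The ordering on functions with domain `D`: `f₁ ≤ f₂` iff there is
`e : ι → ι` with `f₁ = e ∘ f₂`. -/
def FLe {D ι : Type} (f₁ f₂ : D → ι) : Prop := ∃ e : ι → ι, f₁ = e ∘ f₂

/-- The cone `⌊d⌋ = {d' ∈ D : d ◁ d'}`. -/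
def cone {D : Type} (lt : D → D → Prop) (d : D) : Set D := {d' | lt d d'}

/-- `ran*(f) = ⋂_{d ∈ D} ran (f ↾ ⌊d⌋)`. -/
def ranStar {D ι : Type} (lt : D → D → Prop) (f : D → ι) : Set ι :=
  ⋂ d : D, f '' cone lt d

/-- `fs` (playing the role of `f*`) and the finite sets `u f` witness `#(D, F)`. -/
def HashWitness {D ι : Type} (lt : D → D → Prop) (F : Set (D → ι))
    (fs : D → ι) (u : (D → ι) → Finset ι) : Prop :=
  fs ∈ F ∧ ∀ f ∈ F, FLe fs f →
    (u f).Nonempty ∧ ↑(u f) ⊆ ranStar lt f ∧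
      ∀ e : ι → ι, fs = e ∘ f → Set.BijOn e ↑(u f) ↑(u fs)

/-- The combinatorial principle `#(D, F)`. -/
def Hash {D ι : Type} (lt : D → D → Prop) (F : Set (D → ι)) : Prop :=
  ∃ fs u, HashWitness lt F fs u

/-- The filter `U` derived from a witness of `#(D, F)` together with a coherent
choice `i f ∈ u f`:  `A ∈ U` iff there are `d ∈ D` and `f ∈ F` with `f ≥ f*`
such that `f⁻¹{i_f} ∩ ⌊d⌋ ⊆ A`. -/
def Ufilter {D ι : Type} (lt : D → D → Prop) (F : Set (D → ι))
    (fs : D → ι) (i : (D → ι) → ι) : Set (Set D) :=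
  {A | ∃ d : D, ∃ f ∈ F, FLe fs f ∧ f ⁻¹' {i f} ∩ cone lt d ⊆ A}

/-- if `A = f⁻¹(X)` for some `f ∈ F` and `X ⊆ ran f`, then the filter
`U` derived from `#(D, F)` measures `A`. -/
theorem stmt_2 {D ι : Type} [Nonempty D] (lt : D → D → Prop)
    (hirr : ∀ d, ¬ lt d d) (htrans : ∀ a b c, lt a b → lt b c → lt a c)
    (hdirD : ∀ d₁ d₂ : D, ∃ d₃, lt d₁ d₃ ∧ lt d₂ d₃)
    (F : Set (D → ι))
    (hdirF : ∀ f₁ ∈ F, ∀ f₂ ∈ F, ∃ f₃ ∈ F, FLe f₁ f₃ ∧ FLe f₂ f₃)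
    (fs : D → ι) (u : (D → ι) → Finset ι) (hw : HashWitness lt F fs u)
    (i : (D → ι) → ι)
    (hi : ∀ f ∈ F, FLe fs f →
      i f ∈ u f ∧ ∀ e : ι → ι, fs = e ∘ f → e (i f) = i fs)
    (A : Set D)
    (hA : ∃ f ∈ F, ∃ X : Set ι, X ⊆ Set.range f ∧ A = f ⁻¹' X) :
    A ∈ Ufilter lt F fs i ∨ Aᶜ ∈ Ufilter lt F fs i := by
  obtain ⟨f, hf, X, hX, rfl⟩ := hA
  obtain ⟨g, hg, ⟨hfsg⟩, e, he⟩ := hdirF fs hw.1 f hf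
  by_cases h : e (i g) ∈ X
  · left
    exact ⟨Classical.arbitrary D, g, hg, ⟨_, ‹fs = _ ∘ g›⟩, fun d' ⟨hd1, _⟩ => by
      simp only [Set.mem_preimage, Set.mem_singleton_iff] at hd1
      simp [Set.mem_preimage, he, hd1, h]⟩
  · right
    exact ⟨Classical.arbitrary D, g, hg, ⟨_, ‹fs = _ ∘ g›⟩, fun d' ⟨hd1, _⟩ => by
      simp only [Set.mem_preimage, Set.mem_singleton_iff] at hd1
      simp [Set.mem_preimage, Set.mem_compl_iff, he, hd1, h]⟩
end

section
/- In the structure H₁ over index domain D, two elements (f,d,u) and (f',d',u') are E-equivalent if and only if: they are E'-equivalent (i.e., f = f' and d = d'), the parity predicate P holds at one iff it holds at the other, and for every finite v ⊆ X the difference predicate D_v holds at one iff it holds at the other. -/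
open scoped symmDiff

/-- Elements of the structure `H₁`: triples `(f, d, u)` with `f` a function on `D`,
`d ∈ D` and `u` a finite subset of `ι` (which contains `X = ⋃ {ran f : f ∈ F}`). -/
abbrev Tri (D ι : Type) : Type := (D → ι) × D × Finset ι

/-- `ran (f ↾ ⌊d⌋)`. -/
def ranAbove {D ι : Type} (lt : D → D → Prop) (f : D → ι) (d : D) : Set ι :=
  f '' cone lt d

/-- The parity predicate: `P(f,d,u)` iff `|u ∩ ran (f ↾ ⌊d⌋)|` is odd. -/
def Ppred {D ι : Type} (lt : D → D → Prop) (t : Tri D ι) : Prop :=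
  Odd ((↑t.2.2 ∩ ranAbove lt t.1 t.2.1).ncard)

/-- The difference predicate: `D_v(f,d,u)` iff `u \ ran (f ↾ ⌊d⌋) ⊆ v` and
`v ∩ ran (f ↾ ⌊d⌋) = ∅`. -/
def Dpred {D ι : Type} (lt : D → D → Prop) (v : Finset ι) (t : Tri D ι) : Prop :=
  (↑t.2.2 : Set ι) \ ranAbove lt t.1 t.2.1 ⊆ ↑v ∧
    (↑v : Set ι) ∩ ranAbove lt t.1 t.2.1 = ∅

/-- The equivalence relation `E`: `(f,d,u) E (f',d',u')` iff `(f,d) = (f',d')` and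
there are `d₀, …, d_{2n-1} ∈ ⌊d⌋` with `u Δ {f d₀} Δ … Δ {f d_{2n-1}} = u'`. -/
def Erel {D ι : Type} [DecidableEq ι] (lt : D → D → Prop) (a b : Tri D ι) : Prop :=
  a.1 = b.1 ∧ a.2.1 = b.2.1 ∧
    ∃ l : List D, (∀ x ∈ l, lt a.2.1 x) ∧ Even l.length ∧
      b.2.2 = l.foldl (fun w x => w ∆ ({a.1 x} : Finset ι)) a.2.2

/-- The relation `R`: `(f,d,u) R (f',d',u')` iff `f ≤ f'` and, for `e` witnessing
this, `u = {i : there are an odd number of j ∈ u' with e j = i}`. -/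
def Rrel {D ι : Type} (a b : Tri D ι) : Prop :=
  FLe a.1 b.1 ∧ ∀ e : ι → ι, a.1 = e ∘ b.1 →
    (↑a.2.2 : Set ι) = {i | Odd ((↑b.2.2 ∩ e ⁻¹' {i}).ncard)}

/-- The action of the group `G` of finite sets: `F_c (f,d,u) = (f,d,u Δ c)`. -/
def Fc {D ι : Type} [DecidableEq ι] (c : Finset ι) (t : Tri D ι) : Tri D ι :=
  (t.1, t.2.1, t.2.2 ∆ c)

section
set_option linter.unusedSectionVars false
variable {ι : Type} [DecidableEq ι]

lemma card_symmDiff_add (A B : Finset ι) :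
    (A ∆ B).card + 2 * (A ∩ B).card = A.card + B.card := by
  have hdis : Disjoint (A ∆ B) (A ∩ B) := by
    rw [Finset.disjoint_left]
    intro i hi hj
    simp [Finset.mem_symmDiff, Finset.mem_inter] at hi hj
    tauto
  have h1 : (A ∆ B) ∪ (A ∩ B) = A ∪ B := by
    ext i; simp [Finset.mem_symmDiff]; tauto
  have h2 := Finset.card_union_of_disjoint hdis
  have h3 := Finset.card_union_add_card_inter A B
  rw [h1] at h2
  omega

def Sfold (m : List ι) : Finset ι := m.foldl (fun w i => w ∆ {i}) ∅

lemma foldl_symmDiff_eq (m : List ι) : ∀ u : Finset ι,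
    m.foldl (fun w i => w ∆ {i}) u = u ∆ Sfold m := by
  induction m with
  | nil => intro u; simp [Sfold, ← Finset.bot_eq_empty]
  | cons i m ih =>
    intro u
    simp only [Sfold, List.foldl_cons] at *
    rw [ih, ih]
    simp only [symmDiff_assoc, ← Finset.bot_eq_empty, bot_symmDiff]
    rw [Finset.bot_eq_empty, ih {i}]

lemma Sfold_cons (i : ι) (m : List ι) : Sfold (i :: m) = {i} ∆ Sfold m := by
  simp only [Sfold, List.foldl_cons]
  rw [foldl_symmDiff_eq]
  simp only [Sfold, ← Finset.bot_eq_empty, bot_symmDiff]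

lemma mem_of_mem_Sfold {m : List ι} {i : ι} (h : i ∈ Sfold m) : i ∈ m := by
  induction m with
  | nil => simp [Sfold] at h
  | cons j m ih =>
    rw [Sfold_cons, Finset.mem_symmDiff] at h
    simp only [Finset.mem_singleton] at h
    rcases h with ⟨h, _⟩ | ⟨h, _⟩
    · simp [h]
    · simp [ih h]

lemma Sfold_card_parity (m : List ι) : (Sfold m).card % 2 = m.length % 2 := by
  induction m with
  | nil => simp [Sfold]
  | cons i m ih =>
    have := card_symmDiff_add ({i} : Finset ι) (Sfold m)
    have hle : (({i} : Finset ι) ∩ Sfold m).card ≤ 1 := by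
      calc _ ≤ ({i} : Finset ι).card := Finset.card_le_card (Finset.inter_subset_left)
        _ = 1 := Finset.card_singleton i
    rw [Sfold_cons]
    simp only [Finset.card_singleton, List.length_cons] at *
    omega

lemma Sfold_nodup {m : List ι} (h : m.Nodup) : Sfold m = m.toFinset := by
  induction m with
  | nil => simp [Sfold]
  | cons i m ih =>
    rw [List.nodup_cons] at h
    rw [Sfold_cons, ih h.2]
    ext j
    simp [Finset.mem_symmDiff]
    rcases eq_or_ne j i with rfl | hne
    · simp [h.1]
    · simp [hne]

lemma foldl_symmDiff_map_eq {D : Type} (f : D → ι) (l : List D) (u : Finset ι) :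
    l.foldl (fun w x => w ∆ ({f x} : Finset ι)) u = u ∆ Sfold (l.map f) := by
  rw [← foldl_symmDiff_eq, List.foldl_map]

lemma ncard_inter_eq (R : Set ι) [DecidablePred (· ∈ R)] (w : Finset ι) :
    ((↑w : Set ι) ∩ R).ncard = (w.filter (· ∈ R)).card := by
  rw [show (↑w : Set ι) ∩ R = ↑(w.filter (· ∈ R)) by ext i; simp, Set.ncard_coe_finset]

lemma filter_symmDiff' (p : ι → Prop) [DecidablePred p] (u c : Finset ι) :
    (u ∆ c).filter p = u.filter p ∆ c.filter p := by
  ext i; simp [Finset.mem_symmDiff]; tauto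

lemma key {R : Set ι} {u c : Finset ι} (hc : ↑c ⊆ R) (he : c.card % 2 = 0) :
    (Odd (((↑(u ∆ c) : Set ι) ∩ R).ncard) ↔ Odd (((↑u : Set ι) ∩ R).ncard)) ∧
      (↑(u ∆ c) : Set ι) \ R = (↑u : Set ι) \ R := by
  classical
  constructor
  · rw [ncard_inter_eq, ncard_inter_eq, filter_symmDiff']
    have hcf : c.filter (· ∈ R) = c :=
      Finset.filter_true_of_mem (fun i hi => hc (Finset.mem_coe.2 hi))
    rw [hcf]
    have := card_symmDiff_add (u.filter (· ∈ R)) c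
    rw [Nat.odd_iff, Nat.odd_iff]
    omega
  · ext i
    simp only [Set.mem_diff, Finset.coe_symmDiff, Set.mem_symmDiff, Finset.mem_coe]
    have : i ∈ c → i ∈ R := fun h => hc (Finset.mem_coe.2 h)
    tauto

end

/-- in `H₁`, two elements are `E`-equivalent iff they are
`E'`-equivalent (same `f` and `d`), agree on the parity predicate `P`, and agree
on every difference predicate `D_v`. -/
theorem stmt_6 {D ι : Type} [DecidableEq ι] (lt : D → D → Prop) (a b : Tri D ι) :
    Erel lt a b ↔
      (a.1 = b.1 ∧ a.2.1 = b.2.1) ∧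
      (Ppred lt a ↔ Ppred lt b) ∧
      (∀ v : Finset ι, Dpred lt v a ↔ Dpred lt v b) := by
  classical
  obtain ⟨f, d, u⟩ := a
  obtain ⟨f', d', u'⟩ := b
  constructor
  · rintro ⟨hf, hd, l, hl, hev, hu'⟩
    dsimp only at hf hd hl hu'
    subst hf; subst hd
    set R := ranAbove lt f d with hR
    have hfold : u' = u ∆ Sfold (l.map f) := by
      rw [hu', ← foldl_symmDiff_eq, List.foldl_map]
    have hsub : ↑(Sfold (l.map f)) ⊆ R := by
      intro i hi
      obtain ⟨x, hx, rfl⟩ := List.mem_map.1 (mem_of_mem_Sfold (Finset.mem_coe.1 hi))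
      exact ⟨x, hl x hx, rfl⟩
    have hpar : (Sfold (l.map f)).card % 2 = 0 := by
      rw [Sfold_card_parity, List.length_map, ← Nat.even_iff]
      exact hev
    obtain ⟨hP, hDset⟩ := key hsub hpar
    refine ⟨⟨rfl, rfl⟩, ?_, ?_⟩
    · simp only [Ppred]
      rw [hfold, ← hR]
      exact hP.symm
    · intro v
      simp only [Dpred]
      rw [hfold, ← hR, hDset]
  · rintro ⟨⟨hf, hd⟩, hP, hD⟩
    dsimp only at hf hd
    subst hf; subst hd
    set R := ranAbove lt f d with hR
    simp only [Ppred] at hP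
    rw [← hR] at hP
    refine ⟨rfl, rfl, ?_⟩
    have h1 : (↑u' : Set ι) \ R ⊆ (↑u : Set ι) \ R := by
      have hv : Dpred lt (u.filter (· ∉ R)) (f, d, u) := by
        constructor
        · intro i hi
          simp only [Set.mem_diff, Finset.mem_coe] at hi
          simp [hi.1, hi.2]
          exact hi.2
        · ext i
          simp only [Set.mem_inter_iff, Finset.coe_filter, Set.mem_setOf_eq,
            Set.mem_empty_iff_false, iff_false]
          rintro ⟨⟨_, h2⟩, h3⟩
          exact h2 h3
      have hs := ((hD _).1 hv).1
      rw [show ranAbove lt (f, d, u').1 (f, d, u').2.1 = R from rfl] at hs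
      intro i hi
      have hmem := hs hi
      simp only [Finset.coe_filter, Set.mem_setOf_eq] at hmem
      exact ⟨Finset.mem_coe.2 hmem.1, hi.2⟩
    have h2 : (↑u : Set ι) \ R ⊆ (↑u' : Set ι) \ R := by
      have hv : Dpred lt (u'.filter (· ∉ R)) (f, d, u') := by
        constructor
        · intro i hi
          simp only [Set.mem_diff, Finset.mem_coe] at hi
          simp [hi.1, hi.2]
          exact hi.2
        · ext i
          simp only [Set.mem_inter_iff, Finset.coe_filter, Set.mem_setOf_eq,
            Set.mem_empty_iff_false, iff_false]
          rintro ⟨⟨_, h2⟩, h3⟩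
          exact h2 h3
      have hs := ((hD _).2 hv).1
      rw [show ranAbove lt (f, d, u).1 (f, d, u).2.1 = R from rfl] at hs
      intro i hi
      have hmem := hs hi
      simp only [Finset.coe_filter, Set.mem_setOf_eq] at hmem
      exact ⟨Finset.mem_coe.2 hmem.1, hi.2⟩
    have hdiff : (↑u : Set ι) \ R = (↑u' : Set ι) \ R := Set.Subset.antisymm h2 h1
    have hnotR : ∀ i, i ∉ R → (i ∈ u ↔ i ∈ u') := by
      intro i hiR
      have := Set.ext_iff.1 hdiff i
      simp only [Set.mem_diff, Finset.mem_coe] at this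
      tauto
    have hcR : (↑(u ∆ u') : Set ι) ⊆ R := by
      intro i hi
      by_contra hiR
      rw [Finset.mem_coe, Finset.mem_symmDiff] at hi
      have := hnotR i hiR
      tauto
    have hceq : u ∆ u' = u.filter (· ∈ R) ∆ u'.filter (· ∈ R) := by
      ext i
      by_cases hiR : i ∈ R
      · simp [Finset.mem_symmDiff, hiR]
      · have := hnotR i hiR
        simp only [Finset.mem_symmDiff, Finset.mem_filter]
        tauto
    have hcard : (u ∆ u').card % 2 = 0 := by
      rw [hceq]
      have hadd := card_symmDiff_add (u.filter (· ∈ R)) (u'.filter (· ∈ R))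
      rw [ncard_inter_eq, ncard_inter_eq, Nat.odd_iff, Nat.odd_iff] at hP
      omega
    have hex : ∀ i : {x // x ∈ u ∆ u'}, ∃ x, lt d x ∧ f x = i.1 := by
      rintro ⟨i, hi⟩
      obtain ⟨x, hx, hfx⟩ := hcR (Finset.mem_coe.2 hi)
      exact ⟨x, hx, hfx⟩
    choose g hg1 hg2 using hex
    refine ⟨(u ∆ u').attach.toList.map g, ?_, ?_, ?_⟩
    · intro x hx
      obtain ⟨i, _, rfl⟩ := List.mem_map.1 hx
      exact hg1 i
    · rw [List.length_map, Finset.length_toList, Finset.card_attach, Nat.even_iff]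
      exact hcard
    · have hmap : ((u ∆ u').attach.toList.map g).map f
          = (u ∆ u').attach.toList.map Subtype.val := by
        rw [List.map_map]
        exact List.map_congr_left (fun i _ => hg2 i)
      have hm : Sfold (((u ∆ u').attach.toList.map g).map f) = u ∆ u' := by
        rw [hmap, Sfold_nodup ((Finset.nodup_toList _).map Subtype.val_injective)]
        ext i
        rw [List.mem_toFinset]
        constructor
        · intro hmem
          obtain ⟨⟨j, hj⟩, _, rfl⟩ := List.mem_map.1 hmem
          exact hj
        · intro hmem
          exact List.mem_map.2 ⟨⟨i, hmem⟩, Finset.mem_toList.2 (Finset.mem_attach _ _), rfl⟩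
      dsimp only
      rw [foldl_symmDiff_map_eq, hm, symmDiff_symmDiff_cancel_left]
end

section
/- For (f,d,u) E' (f',d',u') (so f = f' and d = d'), E-equivalence of (f,d,u) and (f,d,u') is equivalent to the conjunction: u Δ u' ⊆ ran(f ↾ {d'' : d ◁ d''}), |u Δ u'| is even, and u \ ran(f ↾ {d'' : d ◁ d''}) = u' \ ran(f ↾ {d'' : d ◁ d''}). -/
open scoped symmDiff

private def gfold {D ι : Type} [DecidableEq ι] (f : D → ι) (l : List D) : Finset ι :=
  l.foldl (fun w x => w ∆ ({f x} : Finset ι)) ∅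

private lemma empty_sd {ι : Type} [DecidableEq ι] (s : Finset ι) : (∅ : Finset ι) ∆ s = s := by
  rw [show ((∅ : Finset ι) = ⊥) from rfl, bot_symmDiff]

private lemma foldl_eq {D ι : Type} [DecidableEq ι] (f : D → ι) (u : Finset ι) (l : List D) :
    l.foldl (fun w x => w ∆ ({f x} : Finset ι)) u = u ∆ gfold f l := by
  induction l generalizing u with
  | nil =>
    show u = u ∆ ∅
    rw [show ((∅ : Finset ι) = ⊥) from rfl, symmDiff_bot]
  | cons a l ih =>
    show List.foldl _ (u ∆ {f a}) l = u ∆ gfold f (a :: l)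
    rw [ih]
    have h : gfold f (a :: l) = ({f a} : Finset ι) ∆ gfold f l := by
      show List.foldl _ ((∅ : Finset ι) ∆ {f a}) l = _
      rw [ih, empty_sd]
    rw [h, symmDiff_assoc]

private lemma gfold_cons {D ι : Type} [DecidableEq ι] (f : D → ι) (a : D) (l : List D) :
    gfold f (a :: l) = ({f a} : Finset ι) ∆ gfold f l := by
  show List.foldl _ ((∅ : Finset ι) ∆ {f a}) l = _
  rw [foldl_eq, empty_sd]

private lemma sd_mem {ι : Type} [DecidableEq ι] (a : ι) (s : Finset ι) :
    ({a} : Finset ι) ∆ s = if a ∈ s then s.erase a else insert a s := by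
  by_cases h : a ∈ s <;> simp only [h, if_true, if_false] <;> ext x <;>
    by_cases hxa : x = a <;>
    simp [Finset.mem_symmDiff, hxa, h]

private lemma singleton_symmDiff_card {ι : Type} [DecidableEq ι] (a : ι) (s : Finset ι) :
    Even (({a} : Finset ι) ∆ s).card ↔ ¬ Even s.card := by
  rw [sd_mem]
  by_cases h : a ∈ s
  · have hpos : 1 ≤ s.card := Finset.card_pos.mpr ⟨a, h⟩
    rw [if_pos h, Finset.card_erase_of_mem h]
    simp only [Nat.even_iff]
    omega
  · rw [if_neg h, Finset.card_insert_of_notMem h]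
    simp only [Nat.even_iff]
    omega

private lemma gfold_parity {D ι : Type} [DecidableEq ι] (f : D → ι) (l : List D) :
    (Even (gfold f l).card ↔ Even l.length) := by
  induction l with
  | nil => simp [gfold]
  | cons a l ih =>
    rw [gfold_cons, singleton_symmDiff_card, List.length_cons, Nat.even_add_one]
    tauto

private lemma gfold_mem {D ι : Type} [DecidableEq ι] (f : D → ι) (l : List D) {i : ι}
    (hi : i ∈ gfold f l) : ∃ x ∈ l, f x = i := by
  induction l with
  | nil => simp [gfold] at hi
  | cons a l ih =>
    rw [gfold_cons, Finset.mem_symmDiff] at hi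
    rcases hi with ⟨h1, -⟩ | ⟨h1, -⟩
    · exact ⟨a, by simp, (Finset.mem_singleton.mp h1).symm⟩
    · obtain ⟨x, hx, hfx⟩ := ih h1
      exact ⟨x, by simp [hx], hfx⟩

private lemma gfold_exists {D ι : Type} [DecidableEq ι] (lt : D → D → Prop) (f : D → ι) (d : D)
    (s : Finset ι) (hs : (↑s : Set ι) ⊆ ranAbove lt f d) :
    ∃ l : List D, (∀ x ∈ l, lt d x) ∧ l.length = s.card ∧ gfold f l = s := by
  classical
  induction s using Finset.induction_on with
  | empty => exact ⟨[], by simp, by simp, by simp [gfold]⟩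
  | @insert a s ha ih =>
    have hsub : (↑s : Set ι) ⊆ ranAbove lt f d := by
      intro x hx; exact hs (by simp [hx])
    obtain ⟨l, hl1, hl2, hl3⟩ := ih hsub
    obtain ⟨x, hx, hfx⟩ := hs (show a ∈ (↑(insert a s) : Set ι) by simp)
    refine ⟨x :: l, ?_, by simp [hl2, Finset.card_insert_of_notMem ha], ?_⟩
    · intro y hy
      rcases List.mem_cons.mp hy with rfl | hy
      · exact hx
      · exact hl1 y hy
    · rw [gfold_cons, hl3, hfx, sd_mem, if_neg ha]

/-- for elements `(f,d,u)` and `(f,d,u')` of the same `E'`-class,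
`E`-equivalence is equivalent to: `u Δ u' ⊆ ran (f ↾ ⌊d⌋)`, `|u Δ u'|` is even,
and `u \ ran (f ↾ ⌊d⌋) = u' \ ran (f ↾ ⌊d⌋)`. -/
theorem stmt_7 {D ι : Type} [DecidableEq ι] (lt : D → D → Prop)
    (f : D → ι) (d : D) (u u' : Finset ι) :
    Erel lt (f, d, u) (f, d, u') ↔
      ((↑(u ∆ u') : Set ι) ⊆ ranAbove lt f d ∧
       Even (u ∆ u').card ∧
       (↑u : Set ι) \ ranAbove lt f d = (↑u' : Set ι) \ ranAbove lt f d) := by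
  constructor
  · rintro ⟨-, -, l, hl, hlen, hu'⟩
    simp only at hl hu'
    rw [foldl_eq] at hu'
    have hs : u ∆ u' = gfold f l := by
      rw [hu', symmDiff_symmDiff_cancel_left]
    have hsub : (↑(u ∆ u') : Set ι) ⊆ ranAbove lt f d := by
      intro i hi
      rw [hs] at hi
      obtain ⟨x, hx, hfx⟩ := gfold_mem f l (by exact_mod_cast hi)
      exact ⟨x, hl x hx, hfx⟩
    refine ⟨hsub, ?_, ?_⟩
    · rw [hs]; exact (gfold_parity f l).mpr hlen
    · ext i
      simp only [Set.mem_diff, Finset.mem_coe]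
      constructor
      · rintro ⟨hiu, hiR⟩
        refine ⟨?_, hiR⟩
        by_contra h
        exact hiR (hsub (by simp [Set.mem_symmDiff, hiu, h]))
      · rintro ⟨hiu, hiR⟩
        refine ⟨?_, hiR⟩
        by_contra h
        exact hiR (hsub (by simp [Set.mem_symmDiff, hiu, h]))
  · rintro ⟨h1, h2, -⟩
    obtain ⟨l, hl1, hl2, hl3⟩ := gfold_exists lt f d (u ∆ u') h1
    refine ⟨rfl, rfl, l, hl1, by rw [hl2]; exact h2, ?_⟩
    rw [foldl_eq, hl3, symmDiff_symmDiff_cancel_left]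
end

section
/- For each d ∈ D, the map g_d sending (f,d',u) to (f,d',u Δ {f(d)}) (for d' ◁ d) flips the parity predicate P, preserves each difference predicate D_v, and preserves the relation R: if (f,d₁,u) R (f',d₁',u') then (f, d₁, u Δ {f(d)}) R (f', d₁', u' Δ {f'(d)}). -/
open scoped symmDiff

set_option linter.unnecessarySeqFocus false

lemma flip_parity {ι : Type} (s : Set ι) (hs : s.Finite) (x : ι) :
    Odd ((s ∆ ({x} : Set ι)).ncard) ↔ ¬ Odd s.ncard := by
  by_cases hx : x ∈ s
  · have h1 : s ∆ ({x} : Set ι) = s \ {x} := by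
      ext i; simp [Set.mem_symmDiff]; by_cases hi : i = x <;> simp [hi] <;> tauto
    have h2 : (s \ {x}).ncard + 1 = s.ncard := Set.ncard_diff_singleton_add_one hx hs
    rw [h1, ← h2, Nat.odd_add_one, not_not]
  · have h1 : s ∆ ({x} : Set ι) = insert x s := by
      ext i; simp [Set.mem_symmDiff]; by_cases hi : i = x <;> simp [hi] <;> tauto
    rw [h1, Set.ncard_insert_of_notMem hx hs, Nat.odd_add_one]

/-- for `d ∈ D`, the map `g_d : (f,d',u) ↦ (f,d',u Δ {f d})` (defined
for `d' ◁ d`) flips the parity predicate `P`, preserves each difference predicate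
`D_v`, and preserves the relation `R`. -/
theorem stmt_8 {D ι : Type} [DecidableEq ι] (lt : D → D → Prop) (d : D) :
    (∀ (f : D → ι) (d' : D) (u : Finset ι), lt d' d →
      (Ppred lt (f, d', u ∆ ({f d} : Finset ι)) ↔ ¬ Ppred lt (f, d', u))) ∧
    (∀ (v : Finset ι) (f : D → ι) (d' : D) (u : Finset ι), lt d' d →
      (Dpred lt v (f, d', u ∆ ({f d} : Finset ι)) ↔ Dpred lt v (f, d', u))) ∧
    (∀ (f f' : D → ι) (d₁ d₁' : D) (u u' : Finset ι), lt d₁ d → lt d₁' d →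
      Rrel ((f, d₁, u) : Tri D ι) (f', d₁', u') →
      Rrel ((f, d₁, u ∆ ({f d} : Finset ι)) : Tri D ι)
        (f', d₁', u' ∆ ({f' d} : Finset ι))) := by
  constructor
  · intro f d' u hd'
    have hfd : f d ∈ ranAbove lt f d' := ⟨d, hd', rfl⟩
    have hkey : (↑(u ∆ ({f d} : Finset ι)) : Set ι) ∩ ranAbove lt f d'
        = ((↑u : Set ι) ∩ ranAbove lt f d') ∆ ({f d} : Set ι) := by
      rw [Finset.coe_symmDiff, Finset.coe_singleton]
      ext i; simp [Set.mem_symmDiff]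
      by_cases hi : i = f d <;> simp [hi] <;> tauto
    have hfin : ((↑u : Set ι) ∩ ranAbove lt f d').Finite :=
      u.finite_toSet.inter_of_left _
    simp only [Ppred, hkey]
    exact flip_parity _ hfin _
  constructor
  · intro v f d' u hd'
    have hfd : f d ∈ ranAbove lt f d' := ⟨d, hd', rfl⟩
    have hkey : (↑(u ∆ ({f d} : Finset ι)) : Set ι) \ ranAbove lt f d'
        = (↑u : Set ι) \ ranAbove lt f d' := by
      rw [Finset.coe_symmDiff, Finset.coe_singleton]
      ext i; simp [Set.mem_symmDiff]
      by_cases hi : i = f d <;> simp [hi] <;> tauto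
    simp only [Dpred, hkey]
  · rintro f f' d₁ d₁' u u' hd₁ hd₁' ⟨hle, hR⟩
    refine ⟨hle, ?_⟩
    intro e he
    have hu := hR e he
    have hfd : f d = e (f' d) := congrFun he d
    have hdist : ∀ i, ((↑u' : Set ι) ∆ ({f' d} : Set ι)) ∩ e ⁻¹' {i}
        = ((↑u' : Set ι) ∩ e ⁻¹' {i}) ∆ (({f' d} : Set ι) ∩ e ⁻¹' {i}) := by
      intro i
      ext j; simp [Set.mem_symmDiff]; tauto
    ext i
    simp only [Finset.coe_symmDiff, Finset.coe_singleton, Set.mem_symmDiff,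
      Set.mem_setOf_eq, hdist]
    have hfin : ((↑u' : Set ι) ∩ e ⁻¹' {i}).Finite := u'.finite_toSet.inter_of_left _
    by_cases hi : i = f d
    · subst hi
      have h1 : ({f' d} : Set ι) ∩ e ⁻¹' {f d} = {f' d} := by
        ext j; simp; rintro rfl; exact hfd.symm
      rw [h1, flip_parity _ hfin]
      have h2 : f d ∈ (↑u : Set ι) ↔ Odd (((↑u' : Set ι) ∩ e ⁻¹' {f d}).ncard) := by
        rw [hu]; rfl
      simp only [Finset.mem_coe] at h2
      simp only [Set.mem_singleton_iff, Finset.mem_coe, h2]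
      tauto
    · have h1 : ({f' d} : Set ι) ∩ e ⁻¹' {i} = ∅ := by
        ext j; simp; rintro rfl; rw [← hfd]; exact fun h => hi h.symm
      rw [h1]
      have h3 : ((↑u' : Set ι) ∩ e ⁻¹' {i}) ∆ (∅ : Set ι) = (↑u' : Set ι) ∩ e ⁻¹' {i} :=
        symmDiff_bot _
      rw [h3]
      have h2 : i ∈ (↑u : Set ι) ↔ Odd (((↑u' : Set ι) ∩ e ⁻¹' {i}).ncard) := by
        rw [hu]; rfl
      simp only [Finset.mem_coe] at h2
      simp only [Set.mem_singleton_iff, Finset.mem_coe, h2]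
      tauto
end

section
/- For d₁, d₂ ∈ D with d ◁ d₁ and d ◁ d₂, the composition g_{d₁} ∘ g_{d₂}, where g_{d'}(f,d'',u) = (f,d'',u Δ {f(d')}), is an automorphism of the structure H_{1,d}: it preserves π, E', E, P, each D_v, each F_c, and R. -/
open scoped symmDiff

/-- The map `g_{d'} : (f,d'',u) ↦ (f,d'',u Δ {f d'})`. -/
def gmap {D ι : Type} [DecidableEq ι] (d' : D) (t : Tri D ι) : Tri D ι :=
  (t.1, t.2.1, t.2.2 ∆ ({t.1 d'} : Finset ι))

section Aux
set_option linter.unusedSectionVars false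
variable {ι : Type} [DecidableEq ι]

lemma inter_symmDiff (A B S : Set ι) : (A ∆ B) ∩ S = (A ∩ S) ∆ (B ∩ S) := by
  ext y; by_cases h : y ∈ S <;> simp [Set.mem_symmDiff, h]

lemma diff_symmDiff' (A B S : Set ι) : (A ∆ B) \ S = (A \ S) ∆ (B \ S) := by
  ext y; by_cases h : y ∈ S <;> simp [Set.mem_symmDiff, h]

lemma odd_ncard_symmDiff_singleton (t : Set ι) (ht : t.Finite) (x : ι) :
    Odd ((t ∆ {x}).ncard) ↔ ¬ Odd t.ncard := by
  by_cases hx : x ∈ t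
  · have h1 : t ∆ {x} = t \ {x} := by
      ext y; by_cases h : y = x <;> simp [Set.mem_symmDiff, h, hx]
    have h2 : (t \ {x}).ncard = t.ncard - 1 := Set.ncard_diff_singleton_of_mem hx
    have h3 : 1 ≤ t.ncard := Set.ncard_pos ht |>.mpr ⟨x, hx⟩
    rw [h1, h2, Nat.odd_iff, Nat.odd_iff]
    omega
  · have h1 : t ∆ {x} = insert x t := by
      ext y; by_cases h : y = x <;> simp [Set.mem_symmDiff, h, hx]
    rw [h1, Set.ncard_insert_of_notMem hx ht, Nat.odd_iff, Nat.odd_iff]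
    omega

lemma coe_symmDiff' (u : Finset ι) (x : ι) :
    ((↑(u ∆ ({x} : Finset ι)) : Set ι)) = (↑u : Set ι) ∆ ({x} : Set ι) := by
  ext y; simp [Set.mem_symmDiff, Finset.mem_symmDiff]

lemma odd_inter_symmDiff_singleton_mem (u : Finset ι) (x : ι) (S : Set ι) (hx : x ∈ S) :
    Odd (((↑(u ∆ ({x} : Finset ι)) : Set ι) ∩ S).ncard) ↔
      ¬ Odd (((↑u : Set ι) ∩ S).ncard) := by
  rw [coe_symmDiff', inter_symmDiff]
  have : ({x} : Set ι) ∩ S = {x} := by simp [hx]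
  rw [this]
  exact odd_ncard_symmDiff_singleton _ (u.finite_toSet.inter_of_left S) x

lemma inter_symmDiff_singleton_not_mem (u : Finset ι) (x : ι) (S : Set ι) (hx : x ∉ S) :
    ((↑(u ∆ ({x} : Finset ι)) : Set ι) ∩ S) = ((↑u : Set ι) ∩ S) := by
  rw [coe_symmDiff', inter_symmDiff]
  have : ({x} : Set ι) ∩ S = ∅ := by simp [hx]
  rw [this]; simp

lemma foldl_symmDiff {D : Type} (f : D → ι) (s : Finset ι) :
    ∀ (l : List D) (u : Finset ι),
      l.foldl (fun w x => w ∆ ({f x} : Finset ι)) (u ∆ s) =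
        (l.foldl (fun w x => w ∆ ({f x} : Finset ι)) u) ∆ s := by
  intro l
  induction l with
  | nil => intro u; rfl
  | cons a l ih =>
      intro u
      simp only [List.foldl_cons]
      rw [symmDiff_right_comm, ih]

/-- the odd-count set of `u ∆ {x}` under `e`. -/
lemma oddset_symmDiff_singleton (u : Finset ι) (x : ι) (e : ι → ι) :
    {i | Odd (((↑(u ∆ ({x} : Finset ι)) : Set ι) ∩ e ⁻¹' {i}).ncard)} =
      {i | Odd (((↑u : Set ι) ∩ e ⁻¹' {i}).ncard)} ∆ ({e x} : Set ι) := by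
  ext i
  rw [Set.mem_setOf_eq]
  by_cases h : e x = i
  · have hx : x ∈ e ⁻¹' {i} := by simp [h]
    rw [odd_inter_symmDiff_singleton_mem u x _ hx]
    simp [Set.mem_symmDiff, h.symm]
  · have hx : x ∉ e ⁻¹' {i} := by simp [h]
    rw [inter_symmDiff_singleton_not_mem u x _ hx]
    simp [Set.mem_symmDiff, Ne.symm h]

end Aux

section Step
variable {D ι : Type} [DecidableEq ι] (lt : D → D → Prop)

lemma erel_gmap (d' : D) (a b : Tri D ι) :
    Erel lt a b ↔ Erel lt (gmap d' a) (gmap d' b) := by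
  constructor
  · rintro ⟨h1, h2, l, hl, hev, heq⟩
    refine ⟨h1, h2, l, hl, hev, ?_⟩
    show b.2.2 ∆ ({b.1 d'} : Finset ι) = _
    simp only [gmap]
    rw [foldl_symmDiff, ← heq, h1]
  · rintro ⟨h1, h2, l, hl, hev, heq⟩
    simp only [gmap] at h1 h2 hl heq
    rw [foldl_symmDiff, ← h1] at heq
    exact ⟨h1, h2, l, hl, hev, symmDiff_left_inj.mp heq⟩

lemma ppred_gmap (d' : D) (t : Tri D ι) (h : lt t.2.1 d') :
    Ppred lt (gmap d' t) ↔ ¬ Ppred lt t := by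
  unfold Ppred gmap
  exact odd_inter_symmDiff_singleton_mem _ _ _ ⟨d', h, rfl⟩

lemma dpred_gmap (v : Finset ι) (d' : D) (t : Tri D ι) (h : lt t.2.1 d') :
    Dpred lt v (gmap d' t) ↔ Dpred lt v t := by
  unfold Dpred gmap
  have hx : t.1 d' ∈ ranAbove lt t.1 t.2.1 := ⟨d', h, rfl⟩
  have : ((↑(t.2.2 ∆ ({t.1 d'} : Finset ι)) : Set ι)) \ ranAbove lt t.1 t.2.1
      = (↑t.2.2 : Set ι) \ ranAbove lt t.1 t.2.1 := by
    rw [coe_symmDiff', diff_symmDiff']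
    have h2 : ({t.1 d'} : Set ι) \ ranAbove lt t.1 t.2.1 = ∅ :=
      Set.diff_eq_empty.mpr (Set.singleton_subset_iff.mpr hx)
    rw [h2]
    simp
  rw [this]

lemma fc_gmap (c : Finset ι) (d' : D) (t : Tri D ι) :
    gmap d' (Fc c t) = Fc c (gmap d' t) := by
  unfold Fc gmap
  simp only [Prod.mk.injEq, true_and]
  exact symmDiff_right_comm _ _ _

lemma rrel_gmap (d' : D) (a b : Tri D ι) :
    Rrel a b ↔ Rrel (gmap d' a) (gmap d' b) := by
  constructor
  · rintro ⟨hle, h⟩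
    refine ⟨hle, fun e he => ?_⟩
    have he' : a.1 = e ∘ b.1 := he
    have h2 := h e he'
    show (↑(a.2.2 ∆ ({a.1 d'} : Finset ι)) : Set ι)
        = {i | Odd (((↑(b.2.2 ∆ ({b.1 d'} : Finset ι)) : Set ι) ∩ e ⁻¹' {i}).ncard)}
    have had : a.1 d' = e (b.1 d') := congrFun he' d'
    rw [oddset_symmDiff_singleton, ← h2, coe_symmDiff', had]
  · rintro ⟨hle, h⟩
    refine ⟨hle, fun e he => ?_⟩
    have h2 : (↑(a.2.2 ∆ ({a.1 d'} : Finset ι)) : Set ι)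
        = {i | Odd (((↑(b.2.2 ∆ ({b.1 d'} : Finset ι)) : Set ι) ∩ e ⁻¹' {i}).ncard)} :=
      h e he
    have had : a.1 d' = e (b.1 d') := congrFun he d'
    rw [oddset_symmDiff_singleton, coe_symmDiff', ← had] at h2
    exact symmDiff_left_inj.mp h2

end Step

/-- for `d ◁ d₁` and `d ◁ d₂`, the composition `g_{d₁} ∘ g_{d₂}` is
an automorphism of `H_{1,d}` (whose universe consists of triples `(f,d'',u)` with
`d'' ◁ d`): it preserves `π`, `E'`, `E`, `P`, each `D_v`, each `F_c`, and `R`. -/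
theorem stmt_11 {D ι : Type} [DecidableEq ι] (lt : D → D → Prop)
    (htrans : ∀ a b c, lt a b → lt b c → lt a c)
    (d d₁ d₂ : D) (h₁ : lt d d₁) (h₂ : lt d d₂) :
    (∀ t : Tri D ι, lt t.2.1 d →
      ((gmap d₁ (gmap d₂ t)).1 = t.1 ∧ (gmap d₁ (gmap d₂ t)).2.1 = t.2.1)) ∧
    (∀ a b : Tri D ι, lt a.2.1 d → lt b.2.1 d →
      ((a.1 = b.1 ∧ a.2.1 = b.2.1) ↔
        ((gmap d₁ (gmap d₂ a)).1 = (gmap d₁ (gmap d₂ b)).1 ∧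
         (gmap d₁ (gmap d₂ a)).2.1 = (gmap d₁ (gmap d₂ b)).2.1))) ∧
    (∀ a b : Tri D ι, lt a.2.1 d → lt b.2.1 d →
      (Erel lt a b ↔ Erel lt (gmap d₁ (gmap d₂ a)) (gmap d₁ (gmap d₂ b)))) ∧
    (∀ t : Tri D ι, lt t.2.1 d →
      (Ppred lt t ↔ Ppred lt (gmap d₁ (gmap d₂ t)))) ∧
    (∀ (v : Finset ι) (t : Tri D ι), lt t.2.1 d →
      (Dpred lt v t ↔ Dpred lt v (gmap d₁ (gmap d₂ t)))) ∧
    (∀ (c : Finset ι) (t : Tri D ι), lt t.2.1 d →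
      gmap d₁ (gmap d₂ (Fc c t)) = Fc c (gmap d₁ (gmap d₂ t))) ∧
    (∀ a b : Tri D ι, lt a.2.1 d → lt b.2.1 d →
      (Rrel a b ↔ Rrel (gmap d₁ (gmap d₂ a)) (gmap d₁ (gmap d₂ b)))) := by
  have h1' : ∀ t : Tri D ι, lt t.2.1 d → lt t.2.1 d₁ := fun t ht => htrans _ _ _ ht h₁
  have h2' : ∀ t : Tri D ι, lt t.2.1 d → lt t.2.1 d₂ := fun t ht => htrans _ _ _ ht h₂
  refine ⟨fun t _ => ⟨rfl, rfl⟩, fun a b _ _ => Iff.rfl, ?_, ?_, ?_, ?_, ?_⟩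
  · intro a b _ _
    exact (erel_gmap lt d₂ a b).trans (erel_gmap lt d₁ _ _)
  · intro t ht
    rw [ppred_gmap lt d₁ (gmap d₂ t) (h1' t ht), ppred_gmap lt d₂ t (h2' t ht), not_not]
  · intro v t ht
    exact ((dpred_gmap lt v d₁ (gmap d₂ t) (h1' t ht)).trans (dpred_gmap lt v d₂ t (h2' t ht))).symm
  · intro c t _
    rw [fc_gmap, fc_gmap]
  · intro a b _ _
    exact (rrel_gmap d₂ a b).trans (rrel_gmap d₁ _ _)
end

section
/- Suppose F is countably closed under ≤ (every ≤-increasing ω-sequence has an upper bound) and for each f ∈ F there is a nonempty finite set u_f such that whenever f ≤ f' with witness e, u_f ⊆ e''(u_{f'}) (hence |u_f| ≤ |u_{f'}|). Then there exists f* ∈ F such that |u_f| = |u_{f*}| for all f ≥ f*; moreover, for such f, if e witnesses f* ≤ f, then e restricted to u_f is a bijection onto u_{f*}. -/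
/-- if `F` is countably closed and each `f ∈ F` carries a nonempty
finite set `u f` with `u f ⊆ e '' (u f')` whenever `e` witnesses `f ≤ f'`, then
there is `f* ∈ F` with `|u f| = |u f*|` for all `f ≥ f*` in `F`; moreover for such
`f`, any witness `e` of `f* ≤ f` restricts to a bijection from `u f` onto `u f*`. -/
theorem stmt_13 {D ι : Type} (F : Set (D → ι)) (hne : F.Nonempty)
    (hdir : ∀ f₁ ∈ F, ∀ f₂ ∈ F, ∃ f₃ ∈ F, FLe f₁ f₃ ∧ FLe f₂ f₃)
    (hcc : ∀ g : ℕ → (D → ι), (∀ n, g n ∈ F) → (∀ n, FLe (g n) (g (n + 1))) →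
      ∃ f ∈ F, ∀ n, FLe (g n) f)
    (u : (D → ι) → Finset ι)
    (hune : ∀ f ∈ F, (u f).Nonempty)
    (hmono : ∀ f ∈ F, ∀ f' ∈ F, ∀ e : ι → ι, f = e ∘ f' →
      (↑(u f) : Set ι) ⊆ e '' ↑(u f')) :
    ∃ fs ∈ F, ∀ f ∈ F, FLe fs f →
      (u f).card = (u fs).card ∧
      ∀ e : ι → ι, fs = e ∘ f → Set.BijOn e ↑(u f) ↑(u fs) := by
  classical
  -- card is monotone along FLe
  have hcard : ∀ f ∈ F, ∀ f' ∈ F, FLe f f' → (u f).card ≤ (u f').card := by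
    intro f hf f' hf' ⟨e, he⟩
    have hsub : (↑(u f) : Set ι) ⊆ ↑((u f').image e) := by
      intro x hx
      obtain ⟨y, hy, rfl⟩ := hmono f hf f' hf' e he hx
      exact Finset.mem_coe.2 (Finset.mem_image_of_mem e hy)
    calc (u f).card ≤ ((u f').image e).card :=
          Finset.card_le_card (fun x hx => hsub hx)
      _ ≤ (u f').card := Finset.card_image_le
  -- there is a maximizer of card
  have hmax : ∃ fs ∈ F, ∀ f ∈ F, FLe fs f → (u f).card ≤ (u fs).card := by
    by_contra hcon
    push_neg at hcon
    have H : ∀ fs ∈ F, ∃ f, f ∈ F ∧ FLe fs f ∧ (u fs).card < (u f).card := by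
      intro fs hfs
      obtain ⟨f, hf, hle, hlt⟩ := hcon fs hfs
      exact ⟨f, hf, hle, hlt⟩
    choose next hmem hle hlt using H
    let g : ℕ → {f : D → ι // f ∈ F} := fun n =>
      Nat.rec ⟨hne.choose, hne.choose_spec⟩
        (fun _ p => ⟨next p.1 p.2, hmem p.1 p.2⟩) n
    have hgF : ∀ n, (g n).1 ∈ F := fun n => (g n).2
    have hgle : ∀ n, FLe (g n).1 (g (n + 1)).1 := fun n => hle (g n).1 (g n).2
    have hglt : ∀ n, (u (g n).1).card < (u (g (n + 1)).1).card :=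
      fun n => hlt (g n).1 (g n).2
    have hgrow : ∀ n, n ≤ (u (g n).1).card := by
      intro n
      induction n with
      | zero => exact Nat.zero_le _
      | succ k ih => exact Nat.succ_le_of_lt (lt_of_le_of_lt ih (hglt k))
    obtain ⟨f, hf, hub⟩ := hcc (fun n => (g n).1) hgF hgle
    have := hgrow ((u f).card + 1)
    have h2 := hcard (g ((u f).card + 1)).1 (hgF ((u f).card + 1)) f hf (hub ((u f).card + 1))
    omega
  obtain ⟨fs, hfs, hmaxs⟩ := hmax
  refine ⟨fs, hfs, ?_⟩
  intro f hf hlef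
  have hcardeq : (u f).card = (u fs).card :=
    le_antisymm (hmaxs f hf hlef) (hcard fs hfs f hf hlef)
  refine ⟨hcardeq, ?_⟩
  intro e he
  have hsub : (↑(u fs) : Set ι) ⊆ e '' ↑(u f) := hmono fs hfs f hf e he
  have hsubF : u fs ⊆ (u f).image e := by
    intro x hx
    obtain ⟨y, hy, rfl⟩ := hsub (Finset.mem_coe.2 hx)
    exact Finset.mem_image_of_mem e hy
  have hcardim : ((u f).image e).card ≤ (u fs).card := by
    calc ((u f).image e).card ≤ (u f).card := Finset.card_image_le
      _ = (u fs).card := hcardeq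
  have heq : u fs = (u f).image e :=
    Finset.eq_of_subset_of_card_le hsubF hcardim
  have hcard_image_eq : ((u f).image e).card = (u f).card := by
    rw [← heq]; omega
  have hinj : Set.InjOn e ↑(u f) :=
    Finset.injOn_of_card_image_eq hcard_image_eq
  refine ⟨?_, hinj, ?_⟩
  · intro x hx
    have : e x ∈ (u f).image e := Finset.mem_image_of_mem e (Finset.mem_coe.1 hx)
    rw [← heq] at this
    exact Finset.mem_coe.2 this
  · intro x hx
    exact hsub hx
end

section
/- The abstract elementary class K_σ admits intersections: for every M ∈ K_σ and X ⊆ M, the intersection of all substructures of M (in K_σ) containing X is itself a substructure of M belonging to K_σ. -/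
open scoped symmDiff

/-- An `L_σ`-structure: sorts `A ⊆ 𝔸`, `I ⊆ 𝕀`, `J ⊆ 𝕁` inside ambient types,
functions `π : A → I`, `Q : A → J`, `F_c : A → A` for `c` in the group `G` of
finite subsets of `X` under symmetric difference, and relations `P, D_c ⊆ A`
and `E', E, R ⊆ A²`. -/
structure KStr (X 𝔸 𝕀 𝕁 : Type) [DecidableEq X] where
  A : Set 𝔸
  I : Set 𝕀
  J : Set 𝕁
  map : 𝔸 → 𝕀          -- π
  Q : 𝔸 → 𝕁
  Fc : Finset X → 𝔸 → 𝔸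
  P : Set 𝔸
  Dc : Finset X → Set 𝔸
  E' : 𝔸 → 𝔸 → Prop
  E : 𝔸 → 𝔸 → Prop
  R : 𝔸 → 𝔸 → Prop

variable {X 𝔸 𝕀 𝕁 : Type} [DecidableEq X]

/-- Membership in the class `K_σ`: (0) sorts are respected; (1) `{F_c : c ∈ G}`
is a 1-transitive (i.e. simply transitive) action of `G` on each fiber
`π⁻¹{i}`; (2) `E'` and `E` are equivalence relations on `A` with `a E' b` iff
`π a = π b`; (3) every `(i, j) ∈ I × J` is realized. -/
def InK (M : KStr X 𝔸 𝕀 𝕁) : Prop :=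
  (∀ a ∈ M.A, M.map a ∈ M.I) ∧
  (∀ a ∈ M.A, M.Q a ∈ M.J) ∧
  (∀ (c : Finset X), ∀ a ∈ M.A, M.Fc c a ∈ M.A ∧ M.map (M.Fc c a) = M.map a) ∧
  (∀ a ∈ M.A, M.Fc ∅ a = a) ∧
  (∀ (c c' : Finset X), ∀ a ∈ M.A, M.Fc c (M.Fc c' a) = M.Fc (c ∆ c') a) ∧
  (∀ a ∈ M.A, ∀ b ∈ M.A, M.map a = M.map b → ∃! c : Finset X, M.Fc c a = b) ∧
  (∀ a ∈ M.A, M.E' a a) ∧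
  (∀ a ∈ M.A, ∀ b ∈ M.A, M.E' a b → M.E' b a) ∧
  (∀ a ∈ M.A, ∀ b ∈ M.A, ∀ c ∈ M.A, M.E' a b → M.E' b c → M.E' a c) ∧
  (∀ a ∈ M.A, M.E a a) ∧
  (∀ a ∈ M.A, ∀ b ∈ M.A, M.E a b → M.E b a) ∧
  (∀ a ∈ M.A, ∀ b ∈ M.A, ∀ c ∈ M.A, M.E a b → M.E b c → M.E a c) ∧
  (∀ a ∈ M.A, ∀ b ∈ M.A, (M.E' a b ↔ M.map a = M.map b)) ∧
  (∀ i ∈ M.I, ∀ j ∈ M.J, ∃ a ∈ M.A, M.map a = i ∧ M.Q a = j)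

/-- `N` is an `L_σ`-substructure of `M`. -/
def Substr (N M : KStr X 𝔸 𝕀 𝕁) : Prop :=
  N.A ⊆ M.A ∧ N.I ⊆ M.I ∧ N.J ⊆ M.J ∧
  Set.EqOn N.map M.map N.A ∧ Set.EqOn N.Q M.Q N.A ∧
  (∀ c : Finset X, Set.EqOn (N.Fc c) (M.Fc c) N.A) ∧
  (∀ a ∈ N.A, (a ∈ N.P ↔ a ∈ M.P)) ∧
  (∀ c : Finset X, ∀ a ∈ N.A, (a ∈ N.Dc c ↔ a ∈ M.Dc c)) ∧
  (∀ a ∈ N.A, ∀ b ∈ N.A,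
    (N.E' a b ↔ M.E' a b) ∧ (N.E a b ↔ M.E a b) ∧ (N.R a b ↔ M.R a b))

/-- Key lemma: if `N' ∈ K` is a substructure of `M ∈ K` and `a' ∈ N'`, then the
entire `M`-fiber of `π` through `a'` is contained in `N'`. -/
lemma fiber_mem {M N' : KStr X 𝔸 𝕀 𝕁} (hM : InK M) (hN' : InK N')
    (hsub : Substr N' M) {a' b : 𝔸} (ha' : a' ∈ N'.A) (hb : b ∈ M.A)
    (h : M.map a' = M.map b) : b ∈ N'.A := by
  obtain ⟨hsubA, _, _, _, _, hFc, _⟩ := hsub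
  obtain ⟨_, _, hclos, _, _, htrans, _⟩ := hM
  obtain ⟨c, hc, -⟩ := htrans a' (hsubA ha') b hb h
  have h1 : N'.Fc c a' ∈ N'.A := (hN'.2.2.1 c a' ha').1
  have h2 : N'.Fc c a' = M.Fc c a' := hFc c ha'
  rw [h2, hc] at h1
  exact h1

/-- `K_σ` admits intersections: for every `M ∈ K_σ` and subset
`(SA, SI, SJ)` of its universe, the intersection of all substructures of `M`
belonging to `K_σ` that contain the subset is itself a substructure of `M`
belonging to `K_σ`. -/
theorem stmt_15 (M : KStr X 𝔸 𝕀 𝕁) (hM : InK M)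
    (SA : Set 𝔸) (SI : Set 𝕀) (SJ : Set 𝕁)
    (hSA : SA ⊆ M.A) (hSI : SI ⊆ M.I) (hSJ : SJ ⊆ M.J) :
    ∃ N : KStr X 𝔸 𝕀 𝕁,
      (N.A = ⋂ N' ∈ {N' : KStr X 𝔸 𝕀 𝕁 |
        InK N' ∧ Substr N' M ∧ SA ⊆ N'.A ∧ SI ⊆ N'.I ∧ SJ ⊆ N'.J}, N'.A) ∧
      (N.I = ⋂ N' ∈ {N' : KStr X 𝔸 𝕀 𝕁 |
        InK N' ∧ Substr N' M ∧ SA ⊆ N'.A ∧ SI ⊆ N'.I ∧ SJ ⊆ N'.J}, N'.I) ∧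
      (N.J = ⋂ N' ∈ {N' : KStr X 𝔸 𝕀 𝕁 |
        InK N' ∧ Substr N' M ∧ SA ⊆ N'.A ∧ SI ⊆ N'.I ∧ SJ ⊆ N'.J}, N'.J) ∧
      InK N ∧ Substr N M := by
  set S : Set (KStr X 𝔸 𝕀 𝕁) := {N' : KStr X 𝔸 𝕀 𝕁 |
    InK N' ∧ Substr N' M ∧ SA ⊆ N'.A ∧ SI ⊆ N'.I ∧ SJ ⊆ N'.J} with hS
  have hMS : M ∈ S := by
    refine ⟨hM, ?_, hSA, hSI, hSJ⟩
    exact ⟨le_refl _, le_refl _, le_refl _, fun a _ => rfl, fun a _ => rfl,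
      fun c a _ => rfl, fun a _ => Iff.rfl, fun c a _ => Iff.rfl,
      fun a _ b _ => ⟨Iff.rfl, Iff.rfl, Iff.rfl⟩⟩
  refine ⟨⟨⋂ N' ∈ S, N'.A, ⋂ N' ∈ S, N'.I, ⋂ N' ∈ S, N'.J,
    M.map, M.Q, M.Fc, M.P, M.Dc, M.E', M.E, M.R⟩, rfl, rfl, rfl, ?_, ?_⟩
  · -- InK N
    simp only [InK, Set.mem_iInter]
    obtain ⟨hI0, hJ0, hclos, hid, hcomp, htrans, hE'r, hE's, hE't,
      hEr, hEs, hEt, hE'map, hreal⟩ := hM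
    have memA : ∀ {a : 𝔸}, (∀ N' ∈ S, a ∈ N'.A) → a ∈ M.A := fun ha => ha M hMS
    refine ⟨?_, ?_, ?_, ?_, ?_, ?_, ?_, ?_, ?_, ?_, ?_, ?_, ?_, ?_⟩
    · intro a ha N' hN'
      have haN' : a ∈ N'.A := ha N' hN'
      have : N'.map a = M.map a := hN'.2.1.2.2.2.1 haN'
      rw [← this]
      exact hN'.1.1 a haN'
    · intro a ha N' hN'
      have haN' : a ∈ N'.A := ha N' hN'
      have : N'.Q a = M.Q a := hN'.2.1.2.2.2.2.1 haN'
      rw [← this]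
      exact hN'.1.2.1 a haN'
    · intro c a ha
      constructor
      · intro N' hN'
        have haN' : a ∈ N'.A := ha N' hN'
        have : N'.Fc c a = M.Fc c a := hN'.2.1.2.2.2.2.2.1 c haN'
        rw [← this]
        exact (hN'.1.2.2.1 c a haN').1
      · exact (hclos c a (memA ha)).2
    · exact fun a ha => hid a (memA ha)
    · exact fun c c' a ha => hcomp c c' a (memA ha)
    · exact fun a ha b hb h => htrans a (memA ha) b (memA hb) h
    · exact fun a ha => hE'r a (memA ha)
    · exact fun a ha b hb => hE's a (memA ha) b (memA hb)
    · exact fun a ha b hb c hc => hE't a (memA ha) b (memA hb) c (memA hc)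
    · exact fun a ha => hEr a (memA ha)
    · exact fun a ha b hb => hEs a (memA ha) b (memA hb)
    · exact fun a ha b hb c hc => hEt a (memA ha) b (memA hb) c (memA hc)
    · exact fun a ha b hb => hE'map a (memA ha) b (memA hb)
    · -- realization
      intro i hi j hj
      have hiM : i ∈ M.I := hi M hMS
      have hjM : j ∈ M.J := hj M hMS
      obtain ⟨a, haM, hmap, hQ⟩ := hreal i hiM j hjM
      refine ⟨a, fun N' hN' => ?_, hmap, hQ⟩
      obtain ⟨hKN', hsub, -⟩ := id hN'
      have hiN' : i ∈ N'.I := hi N' hN'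
      have hjN' : j ∈ N'.J := hj N' hN'
      obtain ⟨a', ha'N', hmap', -⟩ :=
        hKN'.2.2.2.2.2.2.2.2.2.2.2.2.2 i hiN' j hjN'
      have : M.map a' = M.map a := by
        rw [hmap, ← hmap']
        exact (hsub.2.2.2.1 ha'N').symm
      exact fiber_mem ⟨hI0, hJ0, hclos, hid, hcomp, htrans, hE'r, hE's, hE't,
        hEr, hEs, hEt, hE'map, hreal⟩ hKN' hsub ha'N' haM this
  · -- Substr N M
    have memA : ∀ {a : 𝔸}, a ∈ ⋂ N' ∈ S, N'.A → a ∈ M.A := fun ha =>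
      Set.mem_iInter₂.mp ha M hMS
    exact ⟨fun a ha => memA ha,
      fun i hi => Set.mem_iInter₂.mp hi M hMS,
      fun j hj => Set.mem_iInter₂.mp hj M hMS,
      fun a _ => rfl, fun a _ => rfl, fun c a _ => rfl,
      fun a _ => Iff.rfl, fun c a _ => Iff.rfl,
      fun a _ b _ => ⟨Iff.rfl, Iff.rfl, Iff.rfl⟩⟩
end

section
/- If κ has uncountable cofinality and σ^ω = σ, then the family F = {f : κ → σ} of all functions from κ to σ is countably closed under the ordering f₁ ≤ f₂ iff ∃e with f₁ = e ∘ f₂: every ≤-increasing ω-sequence ⟨f_n⟩ in F has an upper bound f ∈ F. -/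
/-- if `κ` has uncountable cofinality and `σ^ω = σ`, then the
family of all functions from `κ` to `σ` is countably closed under `≤`: every
`≤`-increasing `ω`-sequence has an upper bound. -/
theorem stmt_18 (κ σ : Cardinal)
    (hcof : Cardinal.aleph0 < κ.ord.cof)
    (hσ : σ ^ Cardinal.aleph0 = σ)
    (fs : ℕ → (κ.ord.ToType → σ.ord.ToType))
    (hinc : ∀ n, FLe (fs n) (fs (n + 1))) :
    ∃ g : κ.ord.ToType → σ.ord.ToType, ∀ n, FLe (fs n) g := by
  by_cases hne : Nonempty σ.ord.ToType
  · -- σ^ω ≃ σ as types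
    have hmk : Cardinal.mk (ℕ → σ.ord.ToType) = Cardinal.mk σ.ord.ToType := by
      rw [Cardinal.mk_arrow, Cardinal.mk_ord_toType, Cardinal.mk_nat,
        Cardinal.lift_id, Cardinal.lift_id, hσ]
    obtain ⟨e⟩ := Cardinal.eq.mp hmk
    refine ⟨fun x => e (fun n => fs n x), fun n => ⟨fun s => e.symm s n, ?_⟩⟩
    funext x
    simp [Function.comp]
  · -- σ's type is empty, so κ's type must be empty too
    refine ⟨fs 0, fun n => ⟨id, ?_⟩⟩
    funext x
    exact absurd ⟨fs 0 x⟩ hne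
end
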